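/- For every integer m ≥ 2 and every integer k with 0 ≤ k ≤ m−1, D(m,k+1) ≥ D(m,k), where D(m,k) is defined in the context. (In words: for the split attack against uniformly distributed adversaries, the expected advantage of truthful bidding over the attack is monotone nondecreasing in the number k of one-item-demand adversaries.) -/

import Mathlib

open intervalIntegral

/-- Truthful minus split-attack utility of a bidder of true type (2,1) submitting the
false-name bids (1,1),(1,1), when the two highest one-item adversary per-item values are
`a ≥ b` and the highest two-item adversary per-item value is `w`. -/
noncomputable def delta (w a b : ℝ) : ℝ :=
  if w ≤ (a + b) / 2 then a - b
  else if w ≤ (1 + a) / 2 then 2 * a - 2 * w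
  else 2 * w - 2

/-- Expected value of `delta` for `m` adversaries with i.i.d. uniform per-item values on
[0,1], of which `k` demand one item, with respect to the relevant order statistics. -/
noncomputable def D (m k : ℕ) : ℝ :=
  if k = 0 then
    m * ∫ w in (0:ℝ)..1, w ^ (m - 1) * delta w 0 0
  else if k = 1 then
    ((m : ℝ) - 1) * ∫ v in (0:ℝ)..1, ∫ w in (0:ℝ)..1, w ^ (m - 2) * delta w v 0
  else if k = m then
    (m : ℝ) * ((m : ℝ) - 1) *
      ∫ v₁ in (0:ℝ)..1, ∫ v₂ in (0:ℝ)..v₁, v₂ ^ (m - 2) * delta 0 v₁ v₂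
  else
    (k : ℝ) * ((k : ℝ) - 1) * ((m : ℝ) - k) *
      ∫ v₁ in (0:ℝ)..1, ∫ v₂ in (0:ℝ)..v₁, ∫ w in (0:ℝ)..1,
        v₂ ^ (k - 2) * w ^ (m - k - 1) * delta w v₁ v₂


lemma delta_eq_max (w a b : ℝ) (hb : b ≤ 1) :
    delta w a b = max (min (a - b) (2 * a - 2 * w)) (2 * w - 2) := by
  unfold delta
  split_ifs with h1 h2
  · rw [min_eq_left (by linarith), max_eq_left (by linarith)]
  · rw [min_eq_right (by linarith), max_eq_left (by linarith)]
  · push_neg at h1 h2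
    rw [max_eq_right (le_trans (min_le_right _ _) (by linarith))]

lemma cont_delta (a b : ℝ) (hb : b ≤ 1) : Continuous fun w => delta w a b := by
  have h : (fun w => delta w a b) = fun w => max (min (a - b) (2 * a - 2 * w)) (2 * w - 2) :=
    funext fun w => delta_eq_max w a b hb
  rw [h]; fun_prop

lemma int_pow_delta (n : ℕ) {a b : ℝ} (hb : 0 ≤ b) (hba : b ≤ a) (ha : a ≤ 1) :
    ∫ w in (0:ℝ)..1, w ^ n * delta w a b
      = 2 / (((n:ℝ) + 1) * ((n:ℝ) + 2)) *
        (2 * ((1 + a) / 2) ^ (n + 2) - ((a + b) / 2) ^ (n + 2) - 1) := by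
  have hcont : Continuous fun w => w ^ n * delta w a b :=
    (continuous_pow n).mul (cont_delta a b (by linarith))
  have hs0 : (0:ℝ) ≤ (a + b) / 2 := by linarith
  have hst : (a + b) / 2 ≤ (1 + a) / 2 := by linarith
  have ht1 : (1 + a) / 2 ≤ 1 := by linarith
  have hint : ∀ x y : ℝ, IntervalIntegrable (fun w => w ^ n * delta w a b) MeasureTheory.volume x y :=
    fun x y => hcont.intervalIntegrable x y
  have hsplit : ∫ w in (0:ℝ)..1, w ^ n * delta w a b
      = (∫ w in (0:ℝ)..((a+b)/2), w ^ n * delta w a b)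
        + ((∫ w in ((a+b)/2)..((1+a)/2), w ^ n * delta w a b)
        + (∫ w in ((1+a)/2)..(1:ℝ), w ^ n * delta w a b)) := by
    rw [integral_add_adjacent_intervals (hint _ _) (hint _ _),
        integral_add_adjacent_intervals (hint _ _) (hint _ _)]
  have h1 : ∫ w in (0:ℝ)..((a+b)/2), w ^ n * delta w a b
      = (((a+b)/2) ^ (n+1) - 0 ^ (n+1)) / ((n:ℝ)+1) * (a - b) := by
    rw [show (∫ w in (0:ℝ)..((a+b)/2), w ^ n * delta w a b)
        = ∫ w in (0:ℝ)..((a+b)/2), w ^ n * (a - b) from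
      integral_congr (fun w hw => by
        rw [Set.uIcc_of_le hs0] at hw
        simp only [delta, if_pos hw.2])]
    rw [integral_mul_const, integral_pow]
  have h2 : ∫ w in ((a+b)/2)..((1+a)/2), w ^ n * delta w a b
      = 2*a * ((((1+a)/2) ^ (n+1) - ((a+b)/2) ^ (n+1)) / ((n:ℝ)+1))
        - 2 * ((((1+a)/2) ^ (n+2) - ((a+b)/2) ^ (n+2)) / ((n:ℝ)+2)) := by
    rw [show (∫ w in ((a+b)/2)..((1+a)/2), w ^ n * delta w a b)
        = ∫ w in ((a+b)/2)..((1+a)/2), (2*a * w ^ n - 2 * w ^ (n+1)) from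
      integral_congr (fun w hw => by
        rw [Set.uIcc_of_le hst] at hw
        simp only [delta]
        split_ifs with hc1 hc2
        · have hw1 : w = (a+b)/2 := le_antisymm hc1 hw.1
          subst hw1; ring
        · ring
        · exact absurd hw.2 hc2)]
    rw [integral_sub ((by fun_prop : Continuous _).intervalIntegrable _ _) ((by fun_prop : Continuous _).intervalIntegrable _ _), integral_const_mul, integral_const_mul,
        integral_pow, integral_pow]
    push_cast; ring
  have h3 : ∫ w in ((1+a)/2)..(1:ℝ), w ^ n * delta w a b
      = 2 * ((1 - ((1+a)/2) ^ (n+2)) / ((n:ℝ)+2)) - 2 * ((1 - ((1+a)/2) ^ (n+1)) / ((n:ℝ)+1)) := by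
    rw [show (∫ w in ((1+a)/2)..(1:ℝ), w ^ n * delta w a b)
        = ∫ w in ((1+a)/2)..(1:ℝ), (2 * w ^ (n+1) - 2 * w ^ n) from
      integral_congr (fun w hw => by
        rw [Set.uIcc_of_le ht1] at hw
        obtain ⟨hwl, hwr⟩ := hw
        simp only [delta]
        split_ifs with hc1 hc2
        · have hb1 : b = 1 := by linarith
          have ha1 : a = 1 := by linarith
          have hw1 : w = 1 := by linarith
          subst hb1 ha1 hw1; ring
        · have hw1 : w = (1+a)/2 := le_antisymm hc2 hwl
          subst hw1; ring
        · ring)]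
    rw [integral_sub ((by fun_prop : Continuous _).intervalIntegrable _ _) ((by fun_prop : Continuous _).intervalIntegrable _ _), integral_const_mul, integral_const_mul,
        integral_pow, integral_pow]
    push_cast
    rw [one_pow, one_pow]
    ring
  rw [hsplit, h1, h2, h3]
  have hn1 : ((n:ℝ) + 1) ≠ 0 := by positivity
  have hn2 : ((n:ℝ) + 2) ≠ 0 := by positivity
  rw [zero_pow (Nat.succ_ne_zero n)]
  field_simp
  ring

noncomputable def Jf (p q : ℕ) : ℝ := ∫ v in (0:ℝ)..1, v ^ p * ((1 + v) / 2) ^ q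

lemma hasDerivAt_u (q : ℕ) (v : ℝ) :
    HasDerivAt (fun x : ℝ => ((1 + x) / 2) ^ q) ((q : ℝ) * ((1 + v) / 2) ^ (q - 1) * (1 / 2)) v := by
  have hu : HasDerivAt (fun x : ℝ => (1 + x) / 2) (1 / 2) v := by
    simpa using ((hasDerivAt_id v).const_add 1).div_const 2
  simpa using hu.fun_pow q

lemma Jparts (p q : ℕ) :
    ((p : ℝ) + 1) * Jf p (q + 1) + (((q : ℝ) + 1) / 2) * Jf (p + 1) q = 1 := by
  have hd : ∀ v ∈ Set.uIcc (0:ℝ) 1,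
      HasDerivAt (fun x : ℝ => x ^ (p + 1) * ((1 + x) / 2) ^ (q + 1))
        (((p:ℝ)+1) * (v ^ p * ((1+v)/2) ^ (q+1)) + (((q:ℝ)+1)/2) * (v ^ (p+1) * ((1+v)/2) ^ q)) v := by
    intro v _
    have h := (hasDerivAt_pow (p+1) v).fun_mul (hasDerivAt_u (q+1) v)
    refine h.congr_deriv ?_
    simp only [Nat.add_sub_cancel]
    push_cast
    ring
  have key := integral_eq_sub_of_hasDerivAt hd
    (((by fun_prop : Continuous fun v : ℝ =>
      ((p:ℝ)+1) * (v ^ p * ((1+v)/2) ^ (q+1)) + (((q:ℝ)+1)/2) * (v ^ (p+1) * ((1+v)/2) ^ q))).intervalIntegrable _ _)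
  rw [integral_add (((by fun_prop : Continuous _)).intervalIntegrable _ _)
      (((by fun_prop : Continuous _)).intervalIntegrable _ _),
    integral_const_mul, integral_const_mul] at key
  unfold Jf
  rw [key]
  norm_num

lemma Jpascal (p q : ℕ) : Jf p (q + 1) = (Jf p q + Jf (p + 1) q) / 2 := by
  unfold Jf
  rw [show (∫ v in (0:ℝ)..1, v ^ p * ((1 + v) / 2) ^ (q+1))
      = ∫ v in (0:ℝ)..1, (v ^ p * ((1 + v) / 2) ^ q / 2 + v ^ (p+1) * ((1 + v) / 2) ^ q / 2) from
    integral_congr (fun v _ => by rw [pow_succ]; ring)]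
  rw [integral_add (((by fun_prop : Continuous _)).intervalIntegrable _ _)
      (((by fun_prop : Continuous _)).intervalIntegrable _ _), integral_div, integral_div]
  ring

lemma Jf0 (q : ℕ) : Jf 0 q = 2 * (1 - (1/2:ℝ) ^ (q + 1)) / ((q : ℝ) + 1) := by
  have hd : ∀ v ∈ Set.uIcc (0:ℝ) 1,
      HasDerivAt (fun x : ℝ => 2 / ((q:ℝ)+1) * ((1 + x) / 2) ^ (q + 1))
        (v ^ 0 * ((1+v)/2) ^ q) v := by
    intro v _
    have h := (hasDerivAt_u (q+1) v).const_mul (2 / ((q:ℝ)+1))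
    refine h.congr_deriv ?_
    simp only [Nat.add_sub_cancel]
    push_cast
    have : ((q:ℝ) + 1) ≠ 0 := by positivity
    field_simp
  have key := integral_eq_sub_of_hasDerivAt hd
    (((by fun_prop : Continuous fun v : ℝ => v ^ 0 * ((1+v)/2) ^ q)).intervalIntegrable _ _)
  unfold Jf
  rw [key]
  norm_num
  ring

lemma Jf1 (q : ℕ) : Jf 1 q = 2 * Jf 0 (q + 1) - Jf 0 q := by
  unfold Jf
  rw [show (∫ v in (0:ℝ)..1, v ^ 1 * ((1 + v) / 2) ^ q)
      = ∫ v in (0:ℝ)..1, (2 * (v ^ 0 * ((1 + v) / 2) ^ (q+1)) - v ^ 0 * ((1 + v) / 2) ^ q) from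
    integral_congr (fun v _ => by rw [pow_succ]; ring)]
  rw [integral_sub (((by fun_prop : Continuous _)).intervalIntegrable _ _)
      (((by fun_prop : Continuous _)).intervalIntegrable _ _), integral_const_mul]

lemma Jf2 (p : ℕ) : Jf p 2 = (1/((p:ℝ)+1) + 2/((p:ℝ)+2) + 1/((p:ℝ)+3)) / 4 := by
  unfold Jf
  rw [show (∫ v in (0:ℝ)..1, v ^ p * ((1 + v) / 2) ^ 2)
      = ∫ v in (0:ℝ)..1, (v ^ p / 4 + 2 * v ^ (p+1) / 4 + v ^ (p+2) / 4) from
    integral_congr (fun v _ => by ring)]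
  rw [integral_add (((by fun_prop : Continuous _)).intervalIntegrable _ _)
      (((by fun_prop : Continuous _)).intervalIntegrable _ _),
    integral_add (((by fun_prop : Continuous _)).intervalIntegrable _ _)
      (((by fun_prop : Continuous _)).intervalIntegrable _ _)]
  rw [integral_div, show (∫ v in (0:ℝ)..1, 2 * v ^ (p+1) / 4) = ∫ v in (0:ℝ)..1, v ^ (p+1) * (2/4) from integral_congr (fun v _ => by ring),
    integral_mul_const, integral_div, integral_pow, integral_pow, integral_pow]
  push_cast
  have h1 : ((p:ℝ) + 1) ≠ 0 := by positivity
  have h2 : ((p:ℝ) + 2) ≠ 0 := by positivity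
  have h3 : ((p:ℝ) + 3) ≠ 0 := by positivity
  field_simp
  ring

lemma Jpos (j q : ℕ) : ((j:ℝ) + 1) * Jf j q ≤ ((j:ℝ) + 2) * Jf (j + 1) q := by
  set c : ℝ := ((j:ℝ) + 1) / ((j:ℝ) + 2) with hc
  have hj2 : (0:ℝ) < (j:ℝ) + 2 := by positivity
  have hc0 : 0 ≤ c := by positivity
  have hc1 : c ≤ 1 := by rw [hc, div_le_one hj2]; linarith
  set g : ℝ := ((1 + c) / 2) ^ q with hg
  have key : 0 ≤ ∫ v in (0:ℝ)..1,
      (((j:ℝ)+2) * v ^ (j+1) - ((j:ℝ)+1) * v ^ j) * (((1 + v) / 2) ^ q - g) := by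
    apply integral_nonneg zero_le_one
    intro v hv
    obtain ⟨hv0, hv1⟩ := hv
    have hvj : (0:ℝ) ≤ v ^ j := pow_nonneg hv0 j
    have hfac : ((j:ℝ)+2) * v ^ (j+1) - ((j:ℝ)+1) * v ^ j = v ^ j * (((j:ℝ)+2) * v - (((j:ℝ)+1))) := by
      rw [pow_succ]; ring
    rcases le_total v c with h | h
    · have h1 : ((j:ℝ)+2) * v - ((j:ℝ)+1) ≤ 0 := by
        have : ((j:ℝ)+2) * v ≤ ((j:ℝ)+2) * c := by nlinarith
        rw [hc] at this
        rw [mul_div_cancel₀ _ (ne_of_gt hj2)] at this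
        linarith
      have h2 : ((1 + v) / 2) ^ q ≤ g := by
        rw [hg]
        apply pow_le_pow_left₀ (by linarith) (by linarith) q
      rw [hfac]
      have hA : v ^ j * (((j:ℝ)+2) * v - (((j:ℝ)+1))) ≤ 0 :=
        mul_nonpos_of_nonneg_of_nonpos hvj h1
      nlinarith [mul_nonneg (neg_nonneg.2 hA) (neg_nonneg.2 (by linarith : ((1 + v) / 2) ^ q - g ≤ 0))]
    · have h1 : 0 ≤ ((j:ℝ)+2) * v - ((j:ℝ)+1) := by
        have : ((j:ℝ)+2) * c ≤ ((j:ℝ)+2) * v := by nlinarith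
        rw [hc, mul_div_cancel₀ _ (ne_of_gt hj2)] at this
        linarith
      have h2 : g ≤ ((1 + v) / 2) ^ q := by
        rw [hg]
        apply pow_le_pow_left₀ (by linarith) (by linarith) q
      rw [hfac]
      exact mul_nonneg (mul_nonneg hvj h1) (by linarith)
  have e0 : (∫ v in (0:ℝ)..1, (((j:ℝ)+2) * v ^ (j+1) - ((j:ℝ)+1) * v ^ j)) = 0 := by
    rw [integral_sub (((by fun_prop : Continuous _)).intervalIntegrable _ _)
        (((by fun_prop : Continuous _)).intervalIntegrable _ _),
      integral_const_mul, integral_const_mul, integral_pow, integral_pow]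
    push_cast
    have h1 : ((j:ℝ) + 1) ≠ 0 := by positivity
    have h2 : ((j:ℝ) + 2) ≠ 0 := by positivity
    field_simp
    ring
  have e1 : (∫ v in (0:ℝ)..1,
      (((j:ℝ)+2) * v ^ (j+1) - ((j:ℝ)+1) * v ^ j) * (((1 + v) / 2) ^ q - g))
      = (((j:ℝ)+2) * Jf (j+1) q - ((j:ℝ)+1) * Jf j q)
        - g * (∫ v in (0:ℝ)..1, (((j:ℝ)+2) * v ^ (j+1) - ((j:ℝ)+1) * v ^ j)) := by
    unfold Jf
    rw [← integral_const_mul ((j:ℝ)+2), ← integral_const_mul ((j:ℝ)+1), ← integral_const_mul g,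
      ← integral_sub (((by fun_prop : Continuous _)).intervalIntegrable _ _)
        (((by fun_prop : Continuous _)).intervalIntegrable _ _),
      ← integral_sub (((by fun_prop : Continuous _)).intervalIntegrable _ _)
        (((by fun_prop : Continuous _)).intervalIntegrable _ _)]
    exact integral_congr (fun v _ => by ring)
  rw [e1, e0] at key
  linarith
lemma D_zero (j : ℕ) : D (j+2) 0 = 2/((j:ℝ)+3) * ((1/2:ℝ)^(j+2) - 1) := by
  have h1 : j + 2 - 1 = j + 1 := by omega
  have e : D (j+2) 0 = ((j:ℝ)+2) * ∫ w in (0:ℝ)..1, w ^ (j+1) * delta w 0 0 := by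
    simp only [D, if_pos, h1]
    push_cast
    ring
  rw [e, int_pow_delta (j+1) (le_refl 0) (le_refl 0) zero_le_one]
  norm_num
  rw [show j+1+2 = j+2+1 from by omega, pow_succ]
  have h2 : ((j:ℝ) + 2) ≠ 0 := by positivity
  have h3 : ((j:ℝ) + 3) ≠ 0 := by positivity
  field_simp
  ring

lemma D_one (j : ℕ) :
    D (j+2) 1 = 2/((j:ℝ)+2) * ((4 - 3*(1/2:ℝ)^(j+2))/((j:ℝ)+3) - 1) := by
  have h1 : j + 2 - 2 = j := by omega
  have e : D (j+2) 1 = ((j:ℝ)+1) * ∫ v in (0:ℝ)..1, ∫ w in (0:ℝ)..1, w ^ j * delta w v 0 := by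
    simp only [D, if_neg (by omega : (1:ℕ) ≠ 0), if_pos, h1]
    push_cast
    ring
  have hin : ∀ v ∈ Set.uIcc (0:ℝ) 1,
      (∫ w in (0:ℝ)..1, w ^ j * delta w v 0)
        = (2/(((j:ℝ)+1)*((j:ℝ)+2)) * 2) * (v ^ 0 * ((1+v)/2) ^ (j+2))
          - (2/(((j:ℝ)+1)*((j:ℝ)+2)) * (1/2:ℝ)^(j+2)) * v ^ (j+2)
          - 2/(((j:ℝ)+1)*((j:ℝ)+2)) := by
    intro v hv
    rw [Set.uIcc_of_le zero_le_one] at hv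
    rw [int_pow_delta j (le_refl 0) hv.1 hv.2]
    rw [show (v + 0)/2 = v * (1/2) from by ring, mul_pow]
    ring
  rw [e, integral_congr hin,
    integral_sub (((by fun_prop : Continuous _)).intervalIntegrable _ _)
      (((by fun_prop : Continuous _)).intervalIntegrable _ _),
    integral_sub (((by fun_prop : Continuous _)).intervalIntegrable _ _)
      (((by fun_prop : Continuous _)).intervalIntegrable _ _),
    integral_const_mul, integral_const_mul, integral_pow, integral_const,
    show (∫ v in (0:ℝ)..1, v ^ 0 * ((1+v)/2) ^ (j+2)) = Jf 0 (j+2) from rfl, Jf0]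
  rw [show (j+2)+1 = (j+2)+1 from rfl]
  push_cast
  rw [show ((1:ℝ)/2)^(j+2+1) = (1/2:ℝ)^(j+2) * (1/2) from pow_succ _ _]
  norm_num
  have h2 : ((j:ℝ) + 1) ≠ 0 := by positivity
  have h3 : ((j:ℝ) + 2) ≠ 0 := by positivity
  have h4 : ((j:ℝ) + 3) ≠ 0 := by positivity
  field_simp
  ring

lemma D_top (j : ℕ) : D (j+2) (j+2) = 1/((j:ℝ)+3) := by
  have h1 : j + 2 - 2 = j := by omega
  have e : D (j+2) (j+2) = ((j:ℝ)+2) * (((j:ℝ)+1)) *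
      ∫ v₁ in (0:ℝ)..1, ∫ v₂ in (0:ℝ)..v₁, v₂ ^ j * delta 0 v₁ v₂ := by
    simp only [D, if_neg (by omega : j+2 ≠ 0), if_neg (by omega : j+2 ≠ 1), if_pos, h1]
    push_cast
    ring
  have hin : ∀ v₁ ∈ Set.uIcc (0:ℝ) 1,
      (∫ v₂ in (0:ℝ)..v₁, v₂ ^ j * delta 0 v₁ v₂)
        = (1/((j:ℝ)+1) - 1/((j:ℝ)+2)) * v₁ ^ (j+2) := by
    intro v₁ hv₁
    rw [Set.uIcc_of_le zero_le_one] at hv₁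
    have h2 : (∫ v₂ in (0:ℝ)..v₁, v₂ ^ j * delta 0 v₁ v₂)
        = ∫ v₂ in (0:ℝ)..v₁, (v₁ * v₂ ^ j - v₂ ^ (j+1)) := by
      apply integral_congr
      intro v₂ hv₂
      rw [Set.uIcc_of_le hv₁.1] at hv₂
      simp only [delta, if_pos (by linarith [hv₂.1, hv₁.1] : (0:ℝ) ≤ (v₁ + v₂)/2)]
      rw [pow_succ]
      ring
    rw [h2, integral_sub (((by fun_prop : Continuous _)).intervalIntegrable _ _)
        (((by fun_prop : Continuous _)).intervalIntegrable _ _),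
      integral_const_mul, integral_pow, integral_pow]
    rw [zero_pow (by omega : j+1 ≠ 0), zero_pow (by omega : j+1+1 ≠ 0)]
    push_cast
    have ha : ((j:ℝ) + 1) ≠ 0 := by positivity
    have hb : ((j:ℝ) + 2) ≠ 0 := by positivity
    field_simp
    ring
  rw [e, integral_congr hin, integral_const_mul, integral_pow]
  rw [zero_pow (by omega : j+2+1 ≠ 0), one_pow]
  push_cast
  have ha : ((j:ℝ) + 1) ≠ 0 := by positivity
  have hb : ((j:ℝ) + 2) ≠ 0 := by positivity
  have hc : ((j:ℝ) + 3) ≠ 0 := by positivity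
  field_simp
  ring

lemma subst_int (i N : ℕ) {t : ℝ} (h0 : 0 ≤ t) :
    ∫ x in (0:ℝ)..t, x ^ i * ((t + x)/2) ^ N = t ^ (i+N+1) * Jf i N := by
  rcases eq_or_lt_of_le h0 with h | h
  · rw [← h]
    simp [zero_pow (by omega : i+N+1 ≠ 0)]
  · have hne : t ≠ 0 := ne_of_gt h
    have hcomp := integral_comp_mul_right (a := (0:ℝ)) (b := 1)
      (fun y => y ^ i * ((t + y)/2) ^ N) hne
    rw [zero_mul, one_mul] at hcomp
    have h2 : (∫ y in (0:ℝ)..t, y ^ i * ((t + y)/2) ^ N)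
        = t * ∫ x in (0:ℝ)..1, (x*t) ^ i * ((t + x*t)/2) ^ N := by
      rw [hcomp, smul_eq_mul, ← mul_assoc, mul_inv_cancel₀ hne, one_mul]
    rw [h2, show (∫ x in (0:ℝ)..1, (x*t) ^ i * ((t + x*t)/2) ^ N)
        = ∫ x in (0:ℝ)..1, (t^(i+N)) * (x ^ i * ((1 + x)/2) ^ N) from
      integral_congr (fun x _ => by
        rw [mul_pow, show (t + x*t)/2 = t * ((1+x)/2) from by ring, mul_pow, pow_add]
        ring),
      integral_const_mul]
    unfold Jf
    rw [← mul_assoc, ← pow_succ']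

lemma D_mid (i n : ℕ) :
    D (i+n+3) (i+2)
      = 4*((i:ℝ)+2)/((n:ℝ)+2) * Jf (i+1) (n+2) - 2/((n:ℝ)+2)
        - 2*((i:ℝ)+2)*((i:ℝ)+1)/(((n:ℝ)+2)*((i:ℝ)+(n:ℝ)+4)) * Jf i (n+2) := by
  have h1 : i + 2 - 2 = i := by omega
  have h2 : i + n + 3 - (i + 2) - 1 = n := by omega
  have e : D (i+n+3) (i+2) = ((i:ℝ)+2) * ((i:ℝ)+1) * ((n:ℝ)+1) *
      ∫ v₁ in (0:ℝ)..1, ∫ v₂ in (0:ℝ)..v₁, ∫ w in (0:ℝ)..1,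
        v₂ ^ i * w ^ n * delta w v₁ v₂ := by
    simp only [D, if_neg (by omega : i+2 ≠ 0), if_neg (by omega : i+2 ≠ 1),
      if_neg (by omega : i+2 ≠ i+n+3), h1, h2]
    push_cast
    ring
  have hout : ∀ v₁ ∈ Set.uIcc (0:ℝ) 1,
      (∫ v₂ in (0:ℝ)..v₁, ∫ w in (0:ℝ)..1, v₂ ^ i * w ^ n * delta w v₁ v₂)
        = (4/(((n:ℝ)+1)*((n:ℝ)+2)*((i:ℝ)+1))) * (v₁ ^ (i+1) * ((1+v₁)/2)^(n+2))
          - (2/(((n:ℝ)+1)*((n:ℝ)+2)*((i:ℝ)+1))) * v₁ ^ (i+1)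
          - (2/(((n:ℝ)+1)*((n:ℝ)+2)) * Jf i (n+2)) * v₁ ^ (i+n+3) := by
    intro v₁ hv₁
    rw [Set.uIcc_of_le zero_le_one] at hv₁
    obtain ⟨h01, h11⟩ := hv₁
    have hin : ∀ v₂ ∈ Set.uIcc (0:ℝ) v₁,
        (∫ w in (0:ℝ)..1, v₂ ^ i * w ^ n * delta w v₁ v₂)
          = (2/(((n:ℝ)+1)*((n:ℝ)+2)) * (2*((1+v₁)/2)^(n+2) - 1)) * v₂ ^ i
            - 2/(((n:ℝ)+1)*((n:ℝ)+2)) * (v₂ ^ i * ((v₁+v₂)/2)^(n+2)) := by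
      intro v₂ hv₂
      rw [Set.uIcc_of_le h01] at hv₂
      rw [show (∫ w in (0:ℝ)..1, v₂ ^ i * w ^ n * delta w v₁ v₂)
          = v₂ ^ i * ∫ w in (0:ℝ)..1, w ^ n * delta w v₁ v₂ from by
        rw [← integral_const_mul]
        exact integral_congr (fun w _ => by ring)]
      rw [int_pow_delta n hv₂.1 hv₂.2 h11]
      ring
    rw [integral_congr hin,
      integral_sub (((by fun_prop : Continuous _)).intervalIntegrable _ _)
        (((by fun_prop : Continuous _)).intervalIntegrable _ _),
      integral_const_mul, integral_const_mul, integral_pow, subst_int i (n+2) h01]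
    rw [zero_pow (by omega : i+1 ≠ 0), show i+(n+2)+1 = i+n+3 from by omega]
    push_cast
    have ha : ((i:ℝ) + 1) ≠ 0 := by positivity
    field_simp
    ring
  rw [e, integral_congr hout,
    integral_sub (((by fun_prop : Continuous _)).intervalIntegrable _ _)
      (((by fun_prop : Continuous _)).intervalIntegrable _ _),
    integral_sub (((by fun_prop : Continuous _)).intervalIntegrable _ _)
      (((by fun_prop : Continuous _)).intervalIntegrable _ _),
    integral_const_mul, integral_const_mul, integral_const_mul, integral_pow, integral_pow,
    show (∫ v₁ in (0:ℝ)..1, v₁ ^ (i+1) * ((1+v₁)/2)^(n+2)) = Jf (i+1) (n+2) from rfl]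
  rw [zero_pow (by omega : i+1+1 ≠ 0), zero_pow (by omega : i+n+3+1 ≠ 0), one_pow, one_pow]
  push_cast
  have ha : ((i:ℝ) + 1) ≠ 0 := by positivity
  have hb : ((i:ℝ) + 2) ≠ 0 := by positivity
  have hc : ((n:ℝ) + 1) ≠ 0 := by positivity
  have hd : ((n:ℝ) + 2) ≠ 0 := by positivity
  have he : ((i:ℝ) + (n:ℝ) + 4) ≠ 0 := by positivity
  field_simp
  ring

set_option maxHeartbeats 2000000 in
theorem stmt_9 (m : ℕ) (hm : 2 ≤ m) (k : ℕ) (hk : k ≤ m - 1) :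
    D m (k + 1) ≥ D m k := by
  rcases Nat.eq_zero_or_pos k with rfl | hk1
  · -- k = 0
    obtain ⟨j, rfl⟩ : ∃ j, m = j + 2 := ⟨m - 2, by omega⟩
    rw [show (0:ℕ) + 1 = 1 from rfl, D_one j, D_zero j, ge_iff_le, ← sub_nonneg]
    have hP : (0:ℝ) < 2 ^ (j+2) := by positivity
    have h2p : (j:ℝ) + 3 ≤ 2 ^ (j+2) := by
      have := Nat.lt_two_pow_self (n := j+2)
      have : (j:ℕ) + 3 ≤ 2 ^ (j+2) := by omega
      exact_mod_cast this
    have key : 2/((j:ℝ)+2) * ((4 - 3*(1/2:ℝ)^(j+2))/((j:ℝ)+3) - 1)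
        - 2/((j:ℝ)+3) * ((1/2:ℝ)^(j+2) - 1)
        = 2*(3*(2:ℝ)^(j+2) - ((j:ℝ)+5))/(((j:ℝ)+2)*((j:ℝ)+3)*(2:ℝ)^(j+2)) := by
      rw [div_pow, one_pow]
      have h2 : ((j:ℝ) + 2) ≠ 0 := by positivity
      have h3 : ((j:ℝ) + 3) ≠ 0 := by positivity
      field_simp
      ring
    rw [key]
    apply div_nonneg _ (by positivity)
    nlinarith [h2p]
  rcases eq_or_lt_of_le (show 1 ≤ k from hk1) with rfl | hk2
  · -- k = 1
    rcases eq_or_lt_of_le hm with rfl | hm3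
    · -- m = 2
      rw [show (2:ℕ) = 0 + 2 from rfl, show (1:ℕ)+1 = 0+2 from rfl]
      rw [D_top 0, show D (0+2) 1 = D (0+2) 1 from rfl, D_one 0]
      norm_num
    · -- m ≥ 3
      obtain ⟨n, rfl⟩ : ∃ n, m = n + 3 := ⟨m - 3, by omega⟩
      have hL := D_mid 0 n
      rw [show (0:ℕ)+n+3 = n+3 from by omega, show (0:ℕ)+2 = 1+1 from rfl] at hL
      have hR := D_one (n+1)
      rw [show n+1+2 = n+3 from by omega] at hR
      rw [hL, hR, Jf1, Jf0, Jf0]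
      simp only [show n+2+1 = n+3 from rfl, show n+2+1+1 = n+4 from rfl]
      rw [show ((1:ℝ)/2)^(n+4) = (1/2:ℝ)^(n+3) * (1/2) from pow_succ _ _]
      push_cast
      rw [ge_iff_le, ← sub_nonneg]
      have key : 4 * (0 + 2) / ((n:ℝ) + 2) *
            (2 * (2 * (1 - (1 / 2:ℝ) ^ (n + 3) * (1 / 2)) / ((n:ℝ) + 3 + 1)) - 2 * (1 - (1 / 2:ℝ) ^ (n + 3)) / ((n:ℝ) + 2 + 1)) -
          2 / ((n:ℝ) + 2) -
        2 * (0 + 2) * (0 + 1) / (((n:ℝ) + 2) * (0 + (n:ℝ) + 4)) * (2 * (1 - (1 / 2:ℝ) ^ (n + 3)) / ((n:ℝ) + 2 + 1)) -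
      2 / ((n:ℝ) + 1 + 2) * ((4 - 3 * (1 / 2:ℝ) ^ (n + 3)) / ((n:ℝ) + 1 + 3) - 1)
          = 2*(3*(n:ℝ) + 3*(1 / 2:ℝ) ^ (n + 3)*((n:ℝ)+6))/(((n:ℝ)+2)*((n:ℝ)+3)*((n:ℝ)+4)) := by
        have h1 : ((n:ℝ) + 2) ≠ 0 := by positivity
        have h2 : ((n:ℝ) + 3) ≠ 0 := by positivity
        have h3 : ((n:ℝ) + 4) ≠ 0 := by positivity
        field_simp
        ring
      rw [key]
      positivity
  · -- k ≥ 2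
    obtain ⟨i, rfl⟩ : ∃ i, k = i + 2 := ⟨k - 2, by omega⟩
    by_cases htop : m = i + 3
    · subst htop
      have hL := D_top (i+1)
      have hR := D_mid i 0
      rw [show i+1+2 = i+3 from by omega] at hL
      rw [show i+0+3 = i+3 from by omega, show (0:ℕ)+2 = 2 from rfl] at hR
      rw [show i+2+1 = i+3 from by omega, hL, hR, Jf2, Jf2]
      push_cast
      rw [ge_iff_le, ← sub_nonneg]
      have h1 : ((i:ℝ) + 1) ≠ 0 := by positivity
      have h2 : ((i:ℝ) + 2) ≠ 0 := by positivity
      have h3 : ((i:ℝ) + 3) ≠ 0 := by positivity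
      have h4 : ((i:ℝ) + 4) ≠ 0 := by positivity
      have h5 : ((i:ℝ) + 5) ≠ 0 := by positivity
      have key : 1 / ((i:ℝ) + 1 + 3) -
          (4 * ((i:ℝ) + 2) / (0 + 2) * ((1 / ((i:ℝ) + 1 + 1) + 2 / ((i:ℝ) + 1 + 2) + 1 / ((i:ℝ) + 1 + 3)) / 4) - 2 / (0 + 2) -
            2 * ((i:ℝ) + 2) * ((i:ℝ) + 1) / ((0 + 2) * ((i:ℝ) + 0 + 4)) * ((1 / ((i:ℝ) + 1) + 2 / ((i:ℝ) + 2) + 1 / ((i:ℝ) + 3)) / 4))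
          = 3/(2*((i:ℝ)+3)*((i:ℝ)+4)) := by
        field_simp
        ring
      rw [key]
      positivity
    · have hm4 : i + 4 ≤ m := by omega
      obtain ⟨n, rfl⟩ : ∃ n, m = i + n + 4 := ⟨m - i - 4, by omega⟩
      have hL := D_mid (i+1) n
      have hR := D_mid i (n+1)
      rw [show i+1+n+3 = i+n+4 from by omega, show i+1+2 = i+2+1 from by omega,
        show i+1+1 = i+2 from rfl] at hL
      rw [show i+(n+1)+3 = i+n+4 from by omega, show n+1+2 = n+3 from rfl] at hR
      have hQ1 := Jpascal i (n+2)
      have hQ2 := Jpascal (i+1) (n+2)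
      rw [show n+2+1 = n+3 from rfl] at hQ1 hQ2
      rw [hQ1, hQ2] at hR
      have hP1 := Jparts i (n+2)
      have hP2 := Jparts (i+1) (n+2)
      rw [show n+2+1 = n+3 from rfl, hQ1] at hP1
      rw [show n+2+1 = n+3 from rfl, hQ2] at hP2
      have hz := Jpos (i+1) (n+2)
      rw [show i+1+1 = i+2 from rfl] at hz
      set X := Jf i (n+2) with hX
      set Y := Jf (i+1) (n+2) with hY
      set Z := Jf (i+2) (n+2) with hZ
      push_cast at hP1 hP2 hz hL hR
      have e1 : ((i:ℝ)+1)*X = 2 - ((i:ℝ)+(n:ℝ)+4)*Y := by linarith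
      have e2 : ((i:ℝ)+2)*Y = 2 - ((i:ℝ)+(n:ℝ)+5)*Z := by linarith
      have hi1 : ((i:ℝ)+1) ≠ 0 := by positivity
      have hi2 : ((i:ℝ)+2) ≠ 0 := by positivity
      have eX : X = (2 - ((i:ℝ)+(n:ℝ)+4)*Y)/((i:ℝ)+1) := by
        field_simp
        linarith
      have eY : Y = (2 - ((i:ℝ)+(n:ℝ)+5)*Z)/((i:ℝ)+2) := by
        field_simp
        linarith
      rw [hL, hR, ge_iff_le, ← sub_nonneg]
      have h8 : 2 ≤ (2*(i:ℝ)+(n:ℝ)+8)*Z := by nlinarith [e2, hz]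
      have hn2 : ((n:ℝ) + 2) ≠ 0 := by positivity
      have hn3 : ((n:ℝ) + 3) ≠ 0 := by positivity
      have hd4 : ((i:ℝ) + (n:ℝ) + 4) ≠ 0 := by positivity
      have hd5 : ((i:ℝ) + (n:ℝ) + 5) ≠ 0 := by positivity
      have key : 4 * ((i:ℝ) + 1 + 2) / ((n:ℝ) + 2) * Z - 2 / ((n:ℝ) + 2) -
            2 * ((i:ℝ) + 1 + 2) * ((i:ℝ) + 1 + 1) / (((n:ℝ) + 2) * ((i:ℝ) + 1 + (n:ℝ) + 4)) * Y -
          (4 * ((i:ℝ) + 2) / ((n:ℝ) + 1 + 2) * ((Y + Z) / 2) - 2 / ((n:ℝ) + 1 + 2) -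
            2 * ((i:ℝ) + 2) * ((i:ℝ) + 1) / (((n:ℝ) + 1 + 2) * ((i:ℝ) + ((n:ℝ) + 1) + 4)) * ((X + Y) / 2))
          = 3/((n:ℝ)+2) * ((2*(i:ℝ)+(n:ℝ)+8)*Z - 2) := by
        rw [eX, eY]
        field_simp
        ring
      rw [key]
      have hbr : 0 ≤ (2*(i:ℝ)+(n:ℝ)+8)*Z - 2 := by linarith
      exact mul_nonneg (by positivity) hbr
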